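/- Let W be a vector space and D : ℤᵏ → End(W) a family of operators satisfying [D(s), D(m)] = (m−s)D(s+m) − m·D(m) + s·D(s) for all s, m ∈ ℤᵏ (where ℤᵏ ⊆ ℂ so that scalar multiplication by m−s, m, s makes sense). Suppose D(m_j ε_j) is a polynomial in m_j with End(W) coefficients for each basis element ε_j, and W is finite-dimensional. Then D(m) is given by an End(W)-valued polynomial in the coordinates (m₁,…,m_k) of m, with constant term D(0). -/

import Mathlib

open MvPolynomial Polynomial

lemma int_cast_range_infinite : (Set.range ((↑) : ℤ → ℂ)).Infinite :=
  Set.infinite_range_of_injective Int.cast_injective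

lemma poly1_int (p : Polynomial ℂ) (h : ∀ z : ℤ, p.eval (z:ℂ) = 0) : p = 0 := by
  apply Polynomial.eq_zero_of_infinite_isRoot
  apply Set.Infinite.mono _ int_cast_range_infinite
  rintro x ⟨z, rfl⟩; exact h z

lemma castFun_cons {κ : ℕ} (z : ℤ) (m' : Fin κ → ℤ) :
    (fun l : Fin (κ+1) => ((Fin.cons (α := fun _ => ℤ) z m' l : ℤ) : ℂ))
      = Fin.cons (z:ℂ) (fun l => ((m' l : ℤ) : ℂ)) := by
  funext l
  refine Fin.cases ?_ (fun i => ?_) l <;> simp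

lemma mv_int {κ : ℕ} (p : MvPolynomial (Fin κ) ℂ)
    (h : ∀ m : Fin κ → ℤ, MvPolynomial.eval (fun l => (m l : ℂ)) p = 0) : p = 0 := by
  induction κ with
  | zero =>
    have := MvPolynomial.eq_C_of_isEmpty p
    rw [this] at h ⊢
    have := h 0
    simpa using this
  | succ κ ih =>
    have hq : ∀ i, (MvPolynomial.finSuccEquiv ℂ κ p).coeff i = 0 := by
      intro i
      apply ih
      intro m'
      have hmap : Polynomial.map (MvPolynomial.eval fun l => ((m' l : ℤ):ℂ))
          (MvPolynomial.finSuccEquiv ℂ κ p) = 0 := by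
        apply poly1_int
        intro z
        have := h (Fin.cons z m')
        rw [castFun_cons] at this
        rw [MvPolynomial.eval_eq_eval_mv_eval'] at this
        exact this
      have := congrArg (fun q => Polynomial.coeff q i) hmap
      simpa [Polynomial.coeff_map] using this
    have : MvPolynomial.finSuccEquiv ℂ κ p = 0 := Polynomial.ext (by simpa using hq)
    have := congrArg (MvPolynomial.finSuccEquiv ℂ κ).symm this
    simpa using this

section BfSec
variable {W : Type*} [AddCommGroup W] [Module ℂ W]
variable {dd : ℕ} (B : Module.Basis (Fin dd) ℂ (Module.End ℂ W)) {κ : ℕ}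

noncomputable def Bf (p : Fin dd → MvPolynomial (Fin κ) ℂ) (x : Fin κ → ℂ) :
    Module.End ℂ W := ∑ r, MvPolynomial.eval x (p r) • B r

lemma Bf_add (p q : Fin dd → MvPolynomial (Fin κ) ℂ) (x : Fin κ → ℂ) :
    Bf B (fun r => p r + q r) x = Bf B p x + Bf B q x := by
  simp [Bf, add_smul, Finset.sum_add_distrib]

lemma Bf_sub (p q : Fin dd → MvPolynomial (Fin κ) ℂ) (x : Fin κ → ℂ) :
    Bf B (fun r => p r - q r) x = Bf B p x - Bf B q x := by
  simp [Bf, sub_smul, Finset.sum_sub_distrib]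

lemma Bf_smulPoly (g : MvPolynomial (Fin κ) ℂ) (p : Fin dd → MvPolynomial (Fin κ) ℂ)
    (x : Fin κ → ℂ) :
    Bf B (fun r => g * p r) x = MvPolynomial.eval x g • Bf B p x := by
  simp [Bf, Finset.smul_sum, smul_smul]

noncomputable def pmul (p q : Fin dd → MvPolynomial (Fin κ) ℂ) :
    Fin dd → MvPolynomial (Fin κ) ℂ :=
  fun t => ∑ r, ∑ s, (B.repr (B r * B s) t) • (p r * q s)

lemma Bf_mul (p q : Fin dd → MvPolynomial (Fin κ) ℂ) (x : Fin κ → ℂ) :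
    Bf B p x * Bf B q x = Bf B (pmul B p q) x := by
  have expand2 : ∀ (a : ℂ) (v : Module.End ℂ W), a • v = ∑ t, (B.repr v t * a) • B t := by
    intro a v
    conv_lhs => rw [← B.sum_repr v]
    rw [Finset.smul_sum]
    exact Finset.sum_congr rfl fun t _ => by rw [smul_smul, mul_comm]
  calc Bf B p x * Bf B q x
      = ∑ r, ∑ s, (MvPolynomial.eval x (p r) * MvPolynomial.eval x (q s)) • (B r * B s) := by
        rw [Bf, Bf, Finset.sum_mul]
        refine Finset.sum_congr rfl (fun r _ => ?_)
        rw [Finset.mul_sum]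
        refine Finset.sum_congr rfl (fun s _ => ?_)
        rw [smul_mul_assoc, mul_smul_comm, smul_smul]
    _ = ∑ r, ∑ s, ∑ t, (B.repr (B r * B s) t * (MvPolynomial.eval x (p r) * MvPolynomial.eval x (q s))) • B t := by
        exact Finset.sum_congr rfl fun r _ => Finset.sum_congr rfl fun s _ => expand2 _ _
    _ = ∑ r, ∑ t, ∑ s, (B.repr (B r * B s) t * (MvPolynomial.eval x (p r) * MvPolynomial.eval x (q s))) • B t := by
        exact Finset.sum_congr rfl fun r _ => Finset.sum_comm
    _ = ∑ t, ∑ r, ∑ s, (B.repr (B r * B s) t * (MvPolynomial.eval x (p r) * MvPolynomial.eval x (q s))) • B t := by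
        exact Finset.sum_comm
    _ = Bf B (pmul B p q) x := by
        rw [Bf]
        refine Finset.sum_congr rfl fun t _ => ?_
        rw [pmul, map_sum, Finset.sum_smul]
        refine Finset.sum_congr rfl fun r _ => ?_
        rw [map_sum, Finset.sum_smul]
        refine Finset.sum_congr rfl fun s _ => ?_
        rw [MvPolynomial.smul_eval]
        have hm : (MvPolynomial.eval x) (p r * q s)
            = (MvPolynomial.eval x) (p r) * (MvPolynomial.eval x) (q s) := map_mul _ _ _
        rw [hm]

lemma Bf_coeff_zero (p : Fin dd → MvPolynomial (Fin κ) ℂ)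
    (h : ∀ m : Fin κ → ℤ, Bf B p (fun l => (m l : ℂ)) = 0) : ∀ r, p r = 0 := by
  intro r
  apply mv_int
  intro m
  have hm := h m
  rw [Bf] at hm
  exact Fintype.linearIndependent_iff.mp B.linearIndependent _ hm r

lemma Bf_ext_int (p q : Fin dd → MvPolynomial (Fin κ) ℂ)
    (h : ∀ m : Fin κ → ℤ, Bf B p (fun l => (m l : ℂ)) = Bf B q (fun l => (m l : ℂ))) :
    ∀ x, Bf B p x = Bf B q x := by
  have h0 := Bf_coeff_zero B (fun r => p r - q r)
    (fun m => by rw [Bf_sub, h m, sub_self])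
  have hpq : ∀ r, p r = q r := fun r => sub_eq_zero.mp (h0 r)
  intro x
  simp only [Bf, hpq]


noncomputable def Bf1 (v : Fin dd → Polynomial ℂ) (z : ℂ) : Module.End ℂ W :=
  ∑ r, (v r).eval z • B r

lemma Bf1_add (v w : Fin dd → Polynomial ℂ) (z : ℂ) :
    Bf1 B (fun r => v r + w r) z = Bf1 B v z + Bf1 B w z := by
  simp [Bf1, add_smul, Finset.sum_add_distrib]

lemma Bf1_sub (v w : Fin dd → Polynomial ℂ) (z : ℂ) :
    Bf1 B (fun r => v r - w r) z = Bf1 B v z - Bf1 B w z := by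
  simp [Bf1, sub_smul, Finset.sum_sub_distrib]

lemma Bf1_smulPoly (g : Polynomial ℂ) (v : Fin dd → Polynomial ℂ) (z : ℂ) :
    Bf1 B (fun r => g * v r) z = g.eval z • Bf1 B v z := by
  simp [Bf1, Finset.smul_sum, smul_smul]

lemma Bf1_const (u : Module.End ℂ W) (z : ℂ) :
    Bf1 B (fun r => Polynomial.C (B.repr u r)) z = u := by
  simp only [Bf1, Polynomial.eval_C]
  exact B.sum_repr u

lemma Bf1_bracket (u : Module.End ℂ W) (v : Fin dd → Polynomial ℂ) (z : ℂ) :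
    ⁅u, Bf1 B v z⁆ = Bf1 B (fun t => ∑ r, (B.repr ⁅u, B r⁆ t) • v r) z := by
  calc ⁅u, Bf1 B v z⁆ = ∑ r, (v r).eval z • ⁅u, B r⁆ := by
        rw [Bf1, Ring.lie_def, Finset.mul_sum, Finset.sum_mul, ← Finset.sum_sub_distrib]
        refine Finset.sum_congr rfl fun r _ => ?_
        rw [mul_smul_comm, smul_mul_assoc, ← smul_sub, Ring.lie_def]
    _ = ∑ r, ∑ t, ((v r).eval z * B.repr ⁅u, B r⁆ t) • B t := by
        refine Finset.sum_congr rfl fun r _ => ?_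
        conv_lhs => rw [← B.sum_repr ⁅u, B r⁆]
        rw [Finset.smul_sum]
        exact Finset.sum_congr rfl fun t _ => by rw [smul_smul]
    _ = ∑ t, ∑ r, ((v r).eval z * B.repr ⁅u, B r⁆ t) • B t := Finset.sum_comm
    _ = Bf1 B (fun t => ∑ r, (B.repr ⁅u, B r⁆ t) • v r) z := by
        rw [Bf1]
        refine Finset.sum_congr rfl fun t _ => ?_
        rw [Polynomial.eval_finset_sum, Finset.sum_smul]
        refine Finset.sum_congr rfl fun r _ => ?_
        rw [Polynomial.eval_smul, smul_eq_mul, mul_comm]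

lemma Bf1_ext (v w : Fin dd → Polynomial ℂ) (S : Set ℂ) (hS : S.Infinite)
    (h : ∀ z ∈ S, Bf1 B v z = Bf1 B w z) : ∀ z, Bf1 B v z = Bf1 B w z := by
  have h0 : ∀ r, v r = w r := by
    intro r
    have hroot : ∀ z ∈ S, (v r - w r).IsRoot z := by
      intro z hz
      have hz2 := h z hz
      rw [Bf1, Bf1] at hz2
      have hsum : ∑ t, ((v t).eval z - (w t).eval z) • B t = 0 := by
        simp only [sub_smul, Finset.sum_sub_distrib, hz2, sub_self]
      have := Fintype.linearIndependent_iff.mp B.linearIndependent _ hsum r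
      simpa [Polynomial.IsRoot] using this
    have : v r - w r = 0 :=
      Polynomial.eq_zero_of_infinite_isRoot _ (hS.mono hroot)
    exact sub_eq_zero.mp this
  intro z
  simp only [Bf1, h0]

lemma Bf_cons (p : Fin dd → MvPolynomial (Fin (κ+1)) ℂ) (s : Fin κ → ℂ) (z : ℂ) :
    Bf B p (Fin.cons z s)
      = Bf1 B (fun r => (MvPolynomial.finSuccEquiv ℂ κ (p r)).map (MvPolynomial.eval s)) z := by
  simp only [Bf, Bf1]
  exact Finset.sum_congr rfl fun r _ => by rw [MvPolynomial.eval_eq_eval_mv_eval']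

lemma Bf1_shift (v : Fin dd → Polynomial ℂ) (z : ℂ) :
    Bf1 B v (z-1) = Bf1 B (fun r => (v r).comp (Polynomial.X - Polynomial.C 1)) z := by
  simp [Bf1, Polynomial.eval_comp]

lemma Bf1_sum_range (n : ℕ) (cax : ℕ → Module.End ℂ W) (z : ℂ) :
    ∑ i ∈ Finset.range n, z^i • cax i
      = Bf1 B (fun r => ∑ i ∈ Finset.range n, Polynomial.C (B.repr (cax i) r) * Polynomial.X ^ i) z := by
  calc ∑ i ∈ Finset.range n, z^i • cax i
      = ∑ i ∈ Finset.range n, ∑ r, (B.repr (cax i) r * z^i) • B r := by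
        refine Finset.sum_congr rfl fun i _ => ?_
        conv_lhs => rw [← B.sum_repr (cax i)]
        rw [Finset.smul_sum]
        exact Finset.sum_congr rfl fun r _ => by rw [smul_smul, mul_comm]
    _ = ∑ r, ∑ i ∈ Finset.range n, (B.repr (cax i) r * z^i) • B r := Finset.sum_comm
    _ = _ := by
        rw [Bf1]
        refine Finset.sum_congr rfl fun r _ => ?_
        rw [Polynomial.eval_finset_sum, Finset.sum_smul]
        exact Finset.sum_congr rfl fun i _ => by
          rw [Polynomial.eval_mul, Polynomial.eval_C, Polynomial.eval_pow, Polynomial.eval_X]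
def P1 (f : ℂ → Module.End ℂ W) : Prop :=
  ∃ v : Fin dd → Polynomial ℂ, ∀ z, f z = Bf1 B v z

lemma P1_const (u : Module.End ℂ W) : P1 B fun _ => u :=
  ⟨fun r => Polynomial.C (B.repr u r), fun z => (Bf1_const B u z).symm⟩

lemma P1_add {f g : ℂ → Module.End ℂ W} (hf : P1 B f) (hg : P1 B g) :
    P1 B fun z => f z + g z := by
  obtain ⟨v, hv⟩ := hf
  obtain ⟨w, hw⟩ := hg
  exact ⟨fun r => v r + w r, fun z => by show f z + g z = _; rw [hv, hw, Bf1_add]⟩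

lemma P1_sub {f g : ℂ → Module.End ℂ W} (hf : P1 B f) (hg : P1 B g) :
    P1 B fun z => f z - g z := by
  obtain ⟨v, hv⟩ := hf
  obtain ⟨w, hw⟩ := hg
  exact ⟨fun r => v r - w r, fun z => by show f z - g z = _; rw [hv, hw, Bf1_sub]⟩

lemma P1_smulPoly (g : Polynomial ℂ) {f : ℂ → Module.End ℂ W} (hf : P1 B f) :
    P1 B fun z => Polynomial.eval z g • f z := by
  obtain ⟨v, hv⟩ := hf
  exact ⟨fun r => g * v r, fun z => by show Polynomial.eval z g • f z = _; rw [hv, Bf1_smulPoly]⟩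

lemma P1_bracket (u : Module.End ℂ W) {f : ℂ → Module.End ℂ W} (hf : P1 B f) :
    P1 B fun z => ⁅u, f z⁆ := by
  obtain ⟨v, hv⟩ := hf
  exact ⟨fun t => ∑ r, (B.repr ⁅u, B r⁆ t) • v r, fun z => by show ⁅u, f z⁆ = _; rw [hv, Bf1_bracket]⟩

lemma P1_shift {f : ℂ → Module.End ℂ W} (hf : P1 B f) :
    P1 B fun z => f (z - 1) := by
  obtain ⟨v, hv⟩ := hf
  exact ⟨fun r => (v r).comp (Polynomial.X - Polynomial.C 1),
    fun z => by show f (z-1) = _; rw [hv (z-1), Bf1_shift]⟩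

lemma P1_congr {f g : ℂ → Module.End ℂ W} (hf : P1 B f) (h : ∀ z, g z = f z) :
    P1 B g := by
  obtain ⟨v, hv⟩ := hf
  exact ⟨v, fun z => by rw [h z, hv]⟩

lemma P1_eq {f g : ℂ → Module.End ℂ W} (hf : P1 B f) (hg : P1 B g)
    {S : Set ℂ} (hS : S.Infinite) (h : ∀ z ∈ S, f z = g z) : ∀ z, f z = g z := by
  obtain ⟨v, hv⟩ := hf
  obtain ⟨w, hw⟩ := hg
  intro z
  rw [hv, hw]
  exact Bf1_ext B v w S hS (fun t ht => by rw [← hv, ← hw]; exact h t ht) z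
lemma Bf_monomial_sum {ι : Type*} (S : Finset ι) (e : ι → (Fin κ →₀ ℕ))
    (c : ι → Module.End ℂ W) (x : Fin κ → ℂ) :
    Bf B (fun r => ∑ i ∈ S, MvPolynomial.monomial (e i) (B.repr (c i) r)) x
      = ∑ i ∈ S, (∏ l, x l ^ (e i) l) • c i := by
  calc Bf B (fun r => ∑ i ∈ S, MvPolynomial.monomial (e i) (B.repr (c i) r)) x
      = ∑ r, ∑ i ∈ S, (B.repr (c i) r * ∏ l, x l ^ (e i) l) • B r := by
        rw [Bf]
        refine Finset.sum_congr rfl fun r _ => ?_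
        rw [map_sum, Finset.sum_smul]
        refine Finset.sum_congr rfl fun i _ => ?_
        rw [MvPolynomial.eval_monomial, Finsupp.prod_pow]
    _ = ∑ i ∈ S, ∑ r, (B.repr (c i) r * ∏ l, x l ^ (e i) l) • B r := Finset.sum_comm
    _ = ∑ i ∈ S, (∏ l, x l ^ (e i) l) • c i := by
        refine Finset.sum_congr rfl fun i _ => ?_
        conv_rhs => rw [← B.sum_repr (c i)]
        rw [Finset.smul_sum]
        exact Finset.sum_congr rfl fun r _ => by rw [smul_smul, mul_comm]

lemma Bf_to_rep (p : Fin dd → MvPolynomial (Fin κ) ℂ) :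
    ∃ (S : Finset (Fin κ → ℕ)) (c : (Fin κ → ℕ) → Module.End ℂ W),
      ∀ x : Fin κ → ℂ, Bf B p x = ∑ i ∈ S, (∏ l, x l ^ i l) • c i := by
  classical
  set bigS : Finset (Fin κ →₀ ℕ) := Finset.univ.biUnion (fun r => (p r).support) with hbigS
  refine ⟨bigS.image ⇑Finsupp.equivFunOnFinite,
    fun i => ∑ r, MvPolynomial.coeff (Finsupp.equivFunOnFinite.symm i) (p r) • B r, fun x => ?_⟩
  rw [Finset.sum_image (by intro a _ b _ h; exact Finsupp.equivFunOnFinite.injective h)]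
  calc Bf B p x = ∑ r, (∑ d ∈ bigS, MvPolynomial.coeff d (p r) * ∏ l, x l ^ d l) • B r := by
        rw [Bf]
        refine Finset.sum_congr rfl fun r _ => ?_
        congr 1
        rw [MvPolynomial.eval_eq']
        refine Finset.sum_subset (fun d hd => Finset.mem_biUnion.mpr ⟨r, Finset.mem_univ r, hd⟩)
          (fun d _ hd => ?_)
        rw [MvPolynomial.notMem_support_iff.mp hd, zero_mul]
    _ = ∑ r, ∑ d ∈ bigS, (MvPolynomial.coeff d (p r) * ∏ l, x l ^ d l) • B r := by
        exact Finset.sum_congr rfl fun r _ => Finset.sum_smul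
    _ = ∑ d ∈ bigS, ∑ r, (MvPolynomial.coeff d (p r) * ∏ l, x l ^ d l) • B r := Finset.sum_comm
    _ = _ := by
        refine Finset.sum_congr rfl fun d _ => ?_
        rw [Finset.smul_sum]
        refine Finset.sum_congr rfl fun r _ => ?_
        rw [smul_smul, mul_comm]
        congr 2
        simp
lemma Bf_division (b : ℂ) (hb : b ≠ 0) (Apoly : MvPolynomial (Fin κ) ℂ)
    (p : Fin dd → MvPolynomial (Fin (κ+1)) ℂ) :
    ∃ (pQ : Fin dd → MvPolynomial (Fin (κ+1)) ℂ) (w : Fin dd → MvPolynomial (Fin κ) ℂ),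
      ∀ (z : ℂ) (s : Fin κ → ℂ),
        Bf B p (Fin.cons z s)
          = (MvPolynomial.eval s Apoly - b * z) • Bf B pQ (Fin.cons z s) + Bf B w s := by
  classical
  set M : Polynomial (MvPolynomial (Fin κ) ℂ) :=
    Polynomial.X - Polynomial.C (MvPolynomial.C b⁻¹ * Apoly) with hMdef
  have hM : M.Monic := Polynomial.monic_X_sub_C _
  set q : Fin dd → Polynomial (MvPolynomial (Fin κ) ℂ) :=
    fun r => MvPolynomial.finSuccEquiv ℂ κ (p r) with hqdef
  refine ⟨fun r => (MvPolynomial.finSuccEquiv ℂ κ).symm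
      (Polynomial.C (MvPolynomial.C (-b⁻¹)) * (q r /ₘ M)),
    fun r => (q r %ₘ M).coeff 0, fun z s => ?_⟩
  have key : ∀ r : Fin dd,
      MvPolynomial.eval (Fin.cons z s) (p r)
        = (MvPolynomial.eval s Apoly - b * z)
            * MvPolynomial.eval (Fin.cons z s) ((MvPolynomial.finSuccEquiv ℂ κ).symm
                (Polynomial.C (MvPolynomial.C (-b⁻¹)) * (q r /ₘ M)))
          + MvPolynomial.eval s ((q r %ₘ M).coeff 0) := by
    intro r
    have hrem : q r %ₘ M = Polynomial.C ((q r %ₘ M).coeff 0) := by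
      apply Polynomial.eq_C_of_degree_le_zero
      have h1 := Polynomial.degree_modByMonic_lt (q r) hM
      rw [hMdef, Polynomial.degree_X_sub_C] at h1
      exact Nat.WithBot.lt_one_iff_le_zero.mp h1
    have hq : q r = Polynomial.C ((q r %ₘ M).coeff 0) + M * (q r /ₘ M) := by
      conv_lhs => rw [← Polynomial.modByMonic_add_div (q r) M]
      rw [← hrem]
    have e1 : MvPolynomial.eval (Fin.cons z s) (p r)
        = Polynomial.eval z (Polynomial.map (MvPolynomial.eval s) (q r)) := by
      rw [hqdef, MvPolynomial.eval_eq_eval_mv_eval']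
    have e2 : MvPolynomial.eval (Fin.cons z s) ((MvPolynomial.finSuccEquiv ℂ κ).symm
          (Polynomial.C (MvPolynomial.C (-b⁻¹)) * (q r /ₘ M)))
        = (-b⁻¹) * Polynomial.eval z (Polynomial.map (MvPolynomial.eval s) (q r /ₘ M)) := by
      rw [MvPolynomial.eval_eq_eval_mv_eval', AlgEquiv.apply_symm_apply,
        Polynomial.map_mul, Polynomial.map_C, Polynomial.eval_mul, Polynomial.eval_C,
        MvPolynomial.eval_C]
    have hq' : Polynomial.map (MvPolynomial.eval s) (q r)
        = Polynomial.C (MvPolynomial.eval s ((q r %ₘ M).coeff 0))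
          + (Polynomial.X - Polynomial.C (b⁻¹ * MvPolynomial.eval s Apoly))
              * Polynomial.map (MvPolynomial.eval s) (q r /ₘ M) := by
      conv_lhs => rw [hq]
      simp only [hMdef, Polynomial.map_add, Polynomial.map_mul, Polynomial.map_sub,
        Polynomial.map_X, Polynomial.map_C, map_mul, MvPolynomial.eval_C]
    rw [e1, e2, hq', Polynomial.eval_add, Polynomial.eval_mul, Polynomial.eval_sub,
      Polynomial.eval_X, Polynomial.eval_C, Polynomial.eval_C]
    field_simp
    ring
  calc Bf B p (Fin.cons z s)
      = ∑ r, ((MvPolynomial.eval s Apoly - b * z)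
            * MvPolynomial.eval (Fin.cons z s) ((MvPolynomial.finSuccEquiv ℂ κ).symm
                (Polynomial.C (MvPolynomial.C (-b⁻¹)) * (q r /ₘ M)))
          + MvPolynomial.eval s ((q r %ₘ M).coeff 0)) • B r := by
        rw [Bf]
        exact Finset.sum_congr rfl fun r _ => by rw [key r]
    _ = _ := by
        rw [Bf, Bf, Finset.smul_sum, ← Finset.sum_add_distrib]
        refine Finset.sum_congr rfl fun r _ => ?_
        rw [add_smul, mul_smul]
lemma aux : ∀ (κ : ℕ) (ε : (Fin κ → ℤ) →+ ℂ), Function.Injective ε →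
    ∀ D : (Fin κ → ℤ) → Module.End ℂ W,
    (∀ s m : Fin κ → ℤ,
      ⁅D s, D m⁆ = (ε m - ε s) • D (s + m) - ε m • D m + ε s • D s) →
    (∀ j : Fin κ, ∃ (n : ℕ) (c : ℕ → Module.End ℂ W),
      ∀ z : ℤ, D (Pi.single j z) = ∑ i ∈ Finset.range n, (z : ℂ) ^ i • c i) →
    ∃ p : Fin dd → MvPolynomial (Fin κ) ℂ,
      ∀ m : Fin κ → ℤ, D m = Bf B p (fun l => (m l : ℂ)) := by
  intro κ
  induction κ with
  | zero =>
    intro ε hε D hbr hpoly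
    refine ⟨fun r => MvPolynomial.C (B.repr (D 0) r), fun m => ?_⟩
    have hm : m = 0 := funext fun l => l.elim0
    rw [hm, Bf]
    simp only [MvPolynomial.eval_C]
    exact (B.sum_repr (D 0)).symm
  | succ κ ih =>
    intro ε hε D hbr hpoly
    classical
    -- the embedding of ℤ^κ into ℤ^(κ+1) (coordinate 0 set to zero)
    set embHom : (Fin κ → ℤ) →+ (Fin (κ+1) → ℤ) :=
      { toFun := fun m' => Fin.cons 0 m'
        map_zero' := by
          funext l
          refine Fin.cases ?_ (fun i => ?_) l <;> simp
        map_add' := by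
          intro a c
          funext l
          refine Fin.cases ?_ (fun i => ?_) l <;> simp } with hembHom
    have embHom_apply : ∀ m', embHom m' = Fin.cons 0 m' := fun _ => rfl
    have tail_emb : ∀ m', Fin.tail (embHom m') = m' := fun m' => Fin.tail_cons _ _
    set ε' : (Fin κ → ℤ) →+ ℂ := ε.comp embHom with hε'def
    have hε' : Function.Injective ε' := by
      intro a c h
      have h2 : embHom a = embHom c := hε h
      have := congrArg Fin.tail h2
      rwa [tail_emb, tail_emb] at this
    set D' : (Fin κ → ℤ) → Module.End ℂ W := fun m' => D (embHom m') with hD'def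
    have hbr' : ∀ s m : Fin κ → ℤ,
        ⁅D' s, D' m⁆ = (ε' m - ε' s) • D' (s + m) - ε' m • D' m + ε' s • D' s := by
      intro s m
      have := hbr (embHom s) (embHom m)
      rw [← map_add] at this
      exact this
    have hemb_single : ∀ (j : Fin κ) (z : ℤ),
        embHom (Pi.single j z) = Pi.single j.succ z := by
      intro j z
      funext l
      rw [embHom_apply]
      refine Fin.cases ?_ (fun i => ?_) l
      · simp [Pi.single_eq_of_ne (Fin.succ_ne_zero j).symm]
      · simp [Pi.single_apply, Fin.succ_inj]
    have hpoly' : ∀ j : Fin κ, ∃ (n : ℕ) (c : ℕ → Module.End ℂ W),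
        ∀ z : ℤ, D' (Pi.single j z) = ∑ i ∈ Finset.range n, (z : ℂ) ^ i • c i := by
      intro j
      obtain ⟨n, c, hc⟩ := hpoly j.succ
      exact ⟨n, c, fun z => by
        show D (embHom (Pi.single j z)) = _
        rw [hemb_single]; exact hc z⟩
    obtain ⟨p', hp'⟩ := ih ε' hε' D' hbr' hpoly'
    -- basic ε facts
    set b : ℂ := ε (Pi.single 0 1) with hbdef
    have hsingle : ∀ (j : Fin (κ+1)) (z : ℤ), ε (Pi.single j z) = (z:ℂ) * ε (Pi.single j 1) := by
      intro j z
      have h1 : (Pi.single j z : Fin (κ+1) → ℤ) = z • (Pi.single j 1 : Fin (κ+1) → ℤ) := by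
        rw [← Pi.single_smul, smul_eq_mul, mul_one]
      rw [h1, map_zsmul, zsmul_eq_mul]
    have hb : b ≠ 0 := by
      intro h
      have h2 : ε (Pi.single 0 1) = ε 0 := by rw [map_zero, ← hbdef, h]
      have h3 := hε h2
      have := congrFun h3 0
      simp at this
    obtain ⟨n, cax, hax⟩ := hpoly 0
    have hp'' : ∀ m' : Fin κ → ℤ, D (embHom m') = Bf B p' (fun l => (m' l : ℂ)) := by
      intro m'
      have := hp' m'
      rwa [hD'def] at this
    -- epsilon of embedded vectors
    have hεemb : ∀ m' : Fin κ → ℤ,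
        ε (embHom m') = ∑ l : Fin κ, ε (Pi.single l.succ 1) * (m' l : ℂ) := by
      intro m'
      have hdecomp : embHom m' = ∑ l : Fin κ, Pi.single l.succ (m' l) := by
        funext j
        rw [embHom_apply]
        refine Fin.cases ?_ (fun i => ?_) j
        · rw [Fin.cons_zero, Finset.sum_apply]
          symm
          apply Finset.sum_eq_zero
          intro l _
          exact Pi.single_eq_of_ne (Fin.succ_ne_zero l).symm (m' l)
        · rw [Fin.cons_succ, Finset.sum_apply]
          simp [Pi.single_apply, Fin.succ_inj, eq_comm]
      rw [hdecomp, map_sum]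
      refine Finset.sum_congr rfl fun l _ => ?_
      rw [hsingle, mul_comm]
    set Aκ : MvPolynomial (Fin κ) ℂ :=
      ∑ l : Fin κ, MvPolynomial.C (ε (Pi.single l.succ 1)) * MvPolynomial.X l with hAκ
    have hAcast : ∀ m' : Fin κ → ℤ,
        MvPolynomial.eval (fun l => (m' l : ℂ)) Aκ = ε (embHom m') := by
      intro m'
      rw [hAκ, hεemb]
      simp
    set pG : Fin dd → MvPolynomial (Fin (κ+1)) ℂ :=
      fun r => MvPolynomial.rename Fin.succ (p' r) with hpG
    have hGx : ∀ x : Fin (κ+1) → ℂ, Bf B pG x = Bf B p' (x ∘ Fin.succ) := by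
      intro x
      rw [Bf, Bf]
      refine Finset.sum_congr rfl fun r _ => ?_
      rw [hpG, MvPolynomial.eval_rename]
    have hG : ∀ m : Fin (κ+1) → ℤ,
        Bf B pG (fun l => (m l : ℂ)) = D (embHom (Fin.tail m)) := by
      intro m
      rw [hGx, hp'' (Fin.tail m)]
      rfl
    set pA : Fin dd → MvPolynomial (Fin (κ+1)) ℂ :=
      fun r => ∑ i ∈ Finset.range n,
        MvPolynomial.monomial (Finsupp.single (0 : Fin (κ+1)) i) (B.repr (cax i) r) with hpA
    have hprod : ∀ (x : Fin (κ+1) → ℂ) (i : ℕ),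
        (∏ l, x l ^ (Finsupp.single (0 : Fin (κ+1)) i) l) = x 0 ^ i := by
      intro x i
      rw [Finset.prod_eq_single (0 : Fin (κ+1))]
      · rw [Finsupp.single_eq_same]
      · intro l _ hl
        rw [Finsupp.single_eq_of_ne hl, pow_zero]
      · intro h
        exact absurd (Finset.mem_univ _) h
    have hAxx : ∀ x : Fin (κ+1) → ℂ,
        Bf B pA x = ∑ i ∈ Finset.range n, x 0 ^ i • cax i := by
      intro x
      rw [hpA]
      rw [Bf_monomial_sum B (Finset.range n) (fun i => Finsupp.single (0 : Fin (κ+1)) i) cax x]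
      exact Finset.sum_congr rfl fun i _ => by rw [hprod]
    have hAx : ∀ m : Fin (κ+1) → ℤ,
        Bf B pA (fun l => (m l : ℂ)) = D (Pi.single 0 (m 0)) := by
      intro m
      rw [hAxx, hax (m 0)]
    -- Fact 1
    set Apoly : MvPolynomial (Fin (κ+1)) ℂ := MvPolynomial.rename Fin.succ Aκ with hApoly
    have hApolyeval : ∀ m : Fin (κ+1) → ℤ,
        MvPolynomial.eval (fun l => (m l : ℂ)) Apoly = ε (embHom (Fin.tail m)) := by
      intro m
      rw [hApoly, MvPolynomial.eval_rename]
      exact hAcast (Fin.tail m)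
    set pP : Fin dd → MvPolynomial (Fin (κ+1)) ℂ := fun r =>
      (pmul B pA pG r - pmul B pG pA r) + Apoly * pG r
        - (MvPolynomial.C b * MvPolynomial.X 0) * pA r with hpP
    have hPx : ∀ x : Fin (κ+1) → ℂ,
        Bf B pP x = ⁅Bf B pA x, Bf B pG x⁆ + MvPolynomial.eval x Apoly • Bf B pG x
          - (b * x 0) • Bf B pA x := by
      intro x
      have h1 : ⁅Bf B pA x, Bf B pG x⁆
          = Bf B (fun r => pmul B pA pG r - pmul B pG pA r) x := by
        rw [Ring.lie_def, Bf_mul, Bf_mul, ← Bf_sub]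
      have h2 : MvPolynomial.eval x Apoly • Bf B pG x
          = Bf B (fun r => Apoly * pG r) x := (Bf_smulPoly B Apoly pG x).symm
      have h3 : (b * x 0) • Bf B pA x
          = Bf B (fun r => (MvPolynomial.C b * MvPolynomial.X 0) * pA r) x := by
        rw [Bf_smulPoly]
        congr 1
        simp
      rw [h1, h2, h3, ← Bf_add, ← Bf_sub]
    have hsm : ∀ m : Fin (κ+1) → ℤ,
        (Pi.single 0 (m 0) : Fin (κ+1) → ℤ) + embHom (Fin.tail m) = m := by
      intro m
      funext l
      rw [embHom_apply, Pi.add_apply]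
      refine Fin.cases ?_ (fun i => ?_) l
      · rw [Fin.cons_zero, Pi.single_eq_same, add_zero]
      · rw [Fin.cons_succ, Pi.single_eq_of_ne (Fin.succ_ne_zero i), zero_add]
        rfl
    have hFact1 : ∀ m : Fin (κ+1) → ℤ,
        (ε (embHom (Fin.tail m)) - b * (m 0 : ℂ)) • D m = Bf B pP (fun l => (m l : ℂ)) := by
      intro m
      rw [hPx, hG, hAx, hApolyeval]
      have hbrm := hbr (Pi.single 0 (m 0)) (embHom (Fin.tail m))
      rw [hsm m] at hbrm
      rw [hbrm]
      have hεs : ε (Pi.single 0 (m 0)) = (m 0 : ℂ) * b := by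
        rw [hsingle, hbdef]
      have hx0 : ((m 0 : ℤ) : ℂ) = (m 0 : ℂ) := rfl
      rw [hεs]
      module
    -- apply the division lemma
    obtain ⟨pQ, w, hdiv⟩ := Bf_division B b hb Aκ pP
    have hcastcons : ∀ m : Fin (κ+1) → ℤ,
        (fun l => ((m l : ℤ) : ℂ))
          = Fin.cons ((m 0 : ℤ) : ℂ) (fun l => ((Fin.tail m l : ℤ) : ℂ)) := by
      intro m
      funext l
      refine Fin.cases ?_ (fun i => ?_) l
      · rw [Fin.cons_zero]
      · rw [Fin.cons_succ]
        rfl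
    have hDm : ∀ m : Fin (κ+1) → ℤ,
        (ε (embHom (Fin.tail m)) - b * ((m 0 : ℤ) : ℂ)) • D m
          = (ε (embHom (Fin.tail m)) - b * ((m 0 : ℤ) : ℂ))
              • Bf B pQ (fun l => ((m l : ℤ) : ℂ))
            + Bf B w (fun l => ((Fin.tail m l : ℤ) : ℂ)) := by
      intro m
      have h2 := hdiv ((m 0 : ℤ) : ℂ) (fun l => ((Fin.tail m l : ℤ) : ℂ))
      rw [← hcastcons m] at h2
      rw [hAcast (Fin.tail m)] at h2
      rw [hFact1 m]
      exact h2
    -- residue argument: the remainder vanishes at all integer points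
    have hw0 : ∀ m' : Fin κ → ℤ, Bf B w (fun l => ((m' l : ℤ) : ℂ)) = 0 := by
      intro m'
      set s : Fin κ → ℂ := fun l => ((m' l : ℤ) : ℂ) with hsdef
      set α : ℂ := ε (embHom m') with hα
      set cE : Module.End ℂ W := Bf B w s with hcE
      set u : Module.End ℂ W := D (Pi.single 0 1) with hu
      have hαb : α ≠ b := by
        intro h
        have h2 : ε (embHom m') = ε (Pi.single 0 1) := by rw [← hα, h, hbdef]
        have h3 := congrFun (hε h2) 0
        rw [embHom_apply, Fin.cons_zero, Pi.single_eq_same] at h3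
        exact absurd h3 (by norm_num)
      have hm0 : ∀ z : ℤ, (embHom m' + Pi.single 0 z : Fin (κ+1) → ℤ) 0 = z := by
        intro z
        rw [Pi.add_apply, embHom_apply, Fin.cons_zero, Pi.single_eq_same, zero_add]
      have htail : ∀ z : ℤ, Fin.tail (embHom m' + Pi.single 0 z) = m' := by
        intro z
        funext l
        show (embHom m' + Pi.single 0 z : Fin (κ+1) → ℤ) l.succ = m' l
        rw [Pi.add_apply, embHom_apply, Fin.cons_succ,
          Pi.single_eq_of_ne (Fin.succ_ne_zero l), add_zero]
      have hcast2 : ∀ z : ℤ,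
          (fun l => (((embHom m' + Pi.single 0 z : Fin (κ+1) → ℤ) l : ℤ) : ℂ))
            = Fin.cons ((z : ℤ) : ℂ) s := by
        intro z
        funext l
        refine Fin.cases ?_ (fun i => ?_) l
        · rw [Fin.cons_zero]
          show (((embHom m' + Pi.single 0 z : Fin (κ+1) → ℤ) 0 : ℤ) : ℂ) = _
          rw [hm0 z]
        · rw [Fin.cons_succ]
          show (((embHom m' + Pi.single 0 z : Fin (κ+1) → ℤ) i.succ : ℤ) : ℂ) = s i
          have h5 : (embHom m' + Pi.single 0 z : Fin (κ+1) → ℤ) i.succ = m' i := by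
            rw [Pi.add_apply, embHom_apply, Fin.cons_succ,
              Pi.single_eq_of_ne (Fin.succ_ne_zero i), add_zero]
          rw [h5, hsdef]
      have H : ∀ z : ℤ,
          (α - b * ((z : ℤ) : ℂ)) • D (embHom m' + Pi.single 0 z)
            = (α - b * ((z : ℤ) : ℂ)) • Bf B pQ (Fin.cons ((z : ℤ) : ℂ) s) + cE := by
        intro z
        have h1 := hDm (embHom m' + Pi.single 0 z)
        rw [htail z, hm0 z, hcast2 z, ← hα, ← hsdef, ← hcE] at h1
        exact h1
      have hεmz : ∀ z : ℤ, ε (embHom m' + Pi.single 0 z) = α + ((z : ℤ) : ℂ) * b := by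
        intro z
        rw [map_add, hsingle, ← hbdef, ← hα]
      have hmz : ∀ z : ℤ,
          (Pi.single 0 1 : Fin (κ+1) → ℤ) + (embHom m' + Pi.single 0 (z-1))
            = embHom m' + Pi.single 0 z := by
        intro z
        funext l
        refine Fin.cases ?_ (fun i => ?_) l
        · simp only [Pi.add_apply, embHom_apply, Fin.cons_zero, Pi.single_eq_same]
          omega
        · simp only [Pi.add_apply, embHom_apply, Fin.cons_succ,
            Pi.single_eq_of_ne (Fin.succ_ne_zero i), add_zero, zero_add]
      have R : ∀ z : ℤ,
          ⁅u, D (embHom m' + Pi.single 0 (z-1))⁆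
            = (α + (((z-1 : ℤ)) : ℂ) * b - b) • D (embHom m' + Pi.single 0 z)
              - (α + ((z-1 : ℤ) : ℂ) * b) • D (embHom m' + Pi.single 0 (z-1))
              + b • u := by
        intro z
        have h1 := hbr (Pi.single 0 1) (embHom m' + Pi.single 0 (z-1))
        rw [hmz z, hεmz (z-1), ← hbdef, ← hu] at h1
        exact h1
      -- the P1 pieces
      have hPQf : P1 B (fun z => Bf B pQ (Fin.cons z s)) :=
        ⟨fun r => (MvPolynomial.finSuccEquiv ℂ κ (pQ r)).map (MvPolynomial.eval s),
          fun z => Bf_cons B pQ s z⟩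
      have t1 : P1 B (fun z => Bf B pQ (Fin.cons (z-1) s)) := P1_shift B hPQf
      have t2 : P1 B (fun z => (α - b*(z-1)) • Bf B pQ (Fin.cons (z-1) s)) := by
        apply P1_congr B (P1_smulPoly B
          (Polynomial.C α - Polynomial.C b * (Polynomial.X - Polynomial.C 1)) t1)
        intro z
        simp
      have t3 : P1 B (fun z => (α - b*(z-1)) • Bf B pQ (Fin.cons (z-1) s) + cE) :=
        P1_add B t2 (P1_const B cE)
      have hPL : P1 B (fun z =>
          (α - b*z) • ⁅u, (α - b*(z-1)) • Bf B pQ (Fin.cons (z-1) s) + cE⁆) := by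
        apply P1_congr B (P1_smulPoly B (Polynomial.C α - Polynomial.C b * Polynomial.X)
          (P1_bracket B u t3))
        intro z
        simp
      have s1 : P1 B (fun z => (α - b*z) • Bf B pQ (Fin.cons z s) + cE) := by
        refine P1_add B ?_ (P1_const B cE)
        apply P1_congr B (P1_smulPoly B (Polynomial.C α - Polynomial.C b * Polynomial.X) hPQf)
        intro z
        simp
      have s2 : P1 B (fun z =>
          (α + (z-1)*b - b) • ((α - b*z) • Bf B pQ (Fin.cons z s) + cE)) := by
        apply P1_congr B (P1_smulPoly B
          (Polynomial.C α + (Polynomial.X - Polynomial.C 1) * Polynomial.C b - Polynomial.C b) s1)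
        intro z
        simp
      have s3 : P1 B (fun z =>
          (α - b*(z-1)) • ((α + (z-1)*b - b) • ((α - b*z) • Bf B pQ (Fin.cons z s) + cE))) := by
        apply P1_congr B (P1_smulPoly B
          (Polynomial.C α - Polynomial.C b * (Polynomial.X - Polynomial.C 1)) s2)
        intro z
        simp
      have s4 : P1 B (fun z =>
          (α + (z-1)*b) • ((α - b*(z-1)) • Bf B pQ (Fin.cons (z-1) s) + cE)) := by
        apply P1_congr B (P1_smulPoly B
          (Polynomial.C α + (Polynomial.X - Polynomial.C 1) * Polynomial.C b) t3)
        intro z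
        simp
      have s5 : P1 B (fun z =>
          (α - b*z) • ((α + (z-1)*b) • ((α - b*(z-1)) • Bf B pQ (Fin.cons (z-1) s) + cE))) := by
        apply P1_congr B (P1_smulPoly B
          (Polynomial.C α - Polynomial.C b * Polynomial.X) s4)
        intro z
        simp
      have s6 : P1 B (fun z => ((α - b*z) * (α - b*(z-1)) * b) • u) := by
        apply P1_congr B (P1_smulPoly B
          ((Polynomial.C α - Polynomial.C b * Polynomial.X)
            * (Polynomial.C α - Polynomial.C b * (Polynomial.X - Polynomial.C 1))
            * Polynomial.C b) (P1_const B u))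
        intro z
        simp
      have hPR : P1 B (fun z =>
          (α - b*(z-1)) • ((α + (z-1)*b - b) • ((α - b*z) • Bf B pQ (Fin.cons z s) + cE))
            - (α - b*z) • ((α + (z-1)*b) • ((α - b*(z-1)) • Bf B pQ (Fin.cons (z-1) s) + cE))
            + ((α - b*z) * (α - b*(z-1)) * b) • u) :=
        P1_add B (P1_sub B s3 s5) s6
      have hagree : ∀ x ∈ Set.range ((↑) : ℤ → ℂ),
          (fun z => (α - b*z) • ⁅u, (α - b*(z-1)) • Bf B pQ (Fin.cons (z-1) s) + cE⁆) x
            = (fun z =>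
          (α - b*(z-1)) • ((α + (z-1)*b - b) • ((α - b*z) • Bf B pQ (Fin.cons z s) + cE))
            - (α - b*z) • ((α + (z-1)*b) • ((α - b*(z-1)) • Bf B pQ (Fin.cons (z-1) s) + cE))
            + ((α - b*z) * (α - b*(z-1)) * b) • u) x := by
        rintro x ⟨z, rfl⟩
        simp only []
        have hH1 := H z
        have hH2 := H (z-1)
        have hR := R z
        push_cast at hH2 hR
        rw [← hH2, ← hH1, Ring.lie_def, mul_smul_comm, smul_mul_assoc, ← smul_sub, ← Ring.lie_def, hR]
        module
      have hfinal := P1_eq B hPL hPR int_cast_range_infinite hagree (α/b)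
      have hγ0 : α - b*(α/b) = 0 := by
        field_simp
        ring
      have hδ : α - b*(α/b - 1) = b := by
        field_simp
        try ring
      have hc2 : α + (α/b - 1)*b - b = 2*α - 2*b := by
        field_simp
        try ring
      rw [hγ0, hδ, hc2] at hfinal
      simp only [zero_smul, smul_zero, zero_mul, mul_zero, zero_add, add_zero, sub_zero,
        zero_sub, neg_zero, smul_smul] at hfinal
      have hne : b * (2*α - 2*b) ≠ 0 := by
        apply mul_ne_zero hb
        intro h
        apply hαb
        have h2 : α - b = 0 := by linear_combination h / 2
        exact sub_eq_zero.mp h2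
      have hcE0 : cE = 0 := by
        rcases smul_eq_zero.mp hfinal.symm with h | h
        · exact absurd h hne
        · exact h
      exact hcE0
    -- conclusion for nonzero m
    have hQall : ∀ m : Fin (κ+1) → ℤ, m ≠ 0 → D m = Bf B pQ (fun l => ((m l : ℤ) : ℂ)) := by
      intro m hm
      have h1 := hDm m
      rw [hw0 (Fin.tail m), add_zero] at h1
      have hne : ε (embHom (Fin.tail m)) - b * ((m 0 : ℤ) : ℂ) ≠ 0 := by
        intro h
        rw [sub_eq_zero] at h
        have h2 : ε (embHom (Fin.tail m)) = ε (Pi.single 0 (m 0)) := by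
          rw [hsingle 0 (m 0), ← hbdef, h]
          exact mul_comm _ _
        have h3 := hε h2
        apply hm
        funext l
        refine Fin.cases ?_ (fun i => ?_) l
        · have h4 := congrFun h3 0
          rw [embHom_apply, Fin.cons_zero, Pi.single_eq_same] at h4
          show m 0 = 0
          omega
        · have h4 := congrFun h3 i.succ
          rw [embHom_apply, Fin.cons_succ, Pi.single_eq_of_ne (Fin.succ_ne_zero i)] at h4
          exact h4
      exact smul_right_injective _ hne h1
    -- conclusion at m = 0
    have hP1a : P1 B (fun z => Bf B pQ (Fin.cons z (fun _ => (0:ℂ)))) :=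
      ⟨fun r => (MvPolynomial.finSuccEquiv ℂ κ (pQ r)).map (MvPolynomial.eval (fun _ => (0:ℂ))),
        fun z => Bf_cons B pQ _ z⟩
    have hP2a : P1 B (fun z => ∑ i ∈ Finset.range n, z^i • cax i) :=
      ⟨fun r => ∑ i ∈ Finset.range n, Polynomial.C (B.repr (cax i) r) * Polynomial.X ^ i,
        fun z => Bf1_sum_range B n cax z⟩
    have hSinf : (((↑) : ℤ → ℂ) '' {z : ℤ | z ≠ 0}).Infinite := by
      apply Set.Infinite.image
      · exact Function.Injective.injOn Int.cast_injective
      · have : ({z : ℤ | z ≠ 0}) = ({0}ᶜ : Set ℤ) := rfl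
        rw [this]
        exact Set.Finite.infinite_compl (Set.finite_singleton 0)
    have hcast3 : ∀ z : ℤ,
        (fun l => (((Pi.single 0 z : Fin (κ+1) → ℤ) l : ℤ) : ℂ))
          = Fin.cons ((z : ℤ) : ℂ) (fun _ => (0:ℂ)) := by
      intro z
      funext l
      refine Fin.cases ?_ (fun i => ?_) l
      · rw [Fin.cons_zero]
        show (((Pi.single 0 z : Fin (κ+1) → ℤ) 0 : ℤ) : ℂ) = _
        rw [Pi.single_eq_same]
      · rw [Fin.cons_succ]
        show (((Pi.single 0 z : Fin (κ+1) → ℤ) i.succ : ℤ) : ℂ) = 0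
        rw [Pi.single_eq_of_ne (Fin.succ_ne_zero i)]
        norm_num
    have hagree2 : ∀ x ∈ (((↑) : ℤ → ℂ) '' {z : ℤ | z ≠ 0}),
        (fun z => Bf B pQ (Fin.cons z (fun _ => (0:ℂ)))) x
          = (fun z => ∑ i ∈ Finset.range n, z^i • cax i) x := by
      rintro x ⟨z, hz, rfl⟩
      simp only []
      have hsne : (Pi.single 0 z : Fin (κ+1) → ℤ) ≠ 0 := by
        intro h
        have := congrFun h 0
        rw [Pi.single_eq_same] at this
        exact hz this
      calc Bf B pQ (Fin.cons ((z:ℤ):ℂ) (fun _ => (0:ℂ)))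
          = Bf B pQ (fun l => (((Pi.single 0 z : Fin (κ+1) → ℤ) l : ℤ) : ℂ)) := by
            rw [hcast3 z]
        _ = D (Pi.single 0 z) := (hQall _ hsne).symm
        _ = ∑ i ∈ Finset.range n, ((z:ℤ):ℂ)^i • cax i := hax z
    have h00 := P1_eq B hP1a hP2a hSinf hagree2 0
    have hQ0 : D 0 = Bf B pQ (fun l => (((0 : Fin (κ+1) → ℤ) l : ℤ) : ℂ)) := by
      have hc0 : (fun l : Fin (κ+1) => (((0 : Fin (κ+1) → ℤ) l : ℤ) : ℂ))
          = Fin.cons (0:ℂ) (fun _ => (0:ℂ)) := by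
        funext l
        refine Fin.cases ?_ (fun i => ?_) l
        · rw [Fin.cons_zero]
          norm_num
        · rw [Fin.cons_succ]
          norm_num
      rw [hc0, h00]
      have h5 : (Pi.single (0 : Fin (κ+1)) (0:ℤ)) = (0 : Fin (κ+1) → ℤ) := Pi.single_zero _
      have h6 := hax 0
      rw [h5] at h6
      rw [h6]
      norm_num
    refine ⟨pQ, fun m => ?_⟩
    rcases eq_or_ne m 0 with rfl | hm
    · exact hQ0
    · exact hQall m hm
end BfSec

/-- Let `W` be a finite-dimensional vector space and
`D : ℤᵏ → End(W)` a family of operators satisfying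
`[D(s), D(m)] = (m−s)D(s+m) − m·D(m) + s·D(s)` (scalars via the injective embedding
`ε : ℤᵏ →+ ℂ`). If each `D(m_j ε_j)` is a polynomial in `m_j` with `End(W)`
coefficients, then `D(m)` is an `End(W)`-valued polynomial in the coordinates
`(m₁,…,m_k)` of `m`, with constant term `D(0)`. -/
theorem stmt4 (k : ℕ) (ε : (Fin k → ℤ) →+ ℂ) (hε : Function.Injective ε)
    (W : Type*) [AddCommGroup W] [Module ℂ W] [FiniteDimensional ℂ W]
    (D : (Fin k → ℤ) → Module.End ℂ W)
    (hbr : ∀ s m : Fin k → ℤ,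
      ⁅D s, D m⁆ = (ε m - ε s) • D (s + m) - ε m • D m + ε s • D s)
    (hpoly : ∀ j : Fin k, ∃ (n : ℕ) (c : ℕ → Module.End ℂ W),
      ∀ z : ℤ, D (Pi.single j z) = ∑ i ∈ Finset.range n, (z : ℂ) ^ i • c i) :
    ∃ (S : Finset (Fin k → ℕ)) (c : (Fin k → ℕ) → Module.End ℂ W),
      (0 : Fin k → ℕ) ∈ S ∧ c 0 = D 0 ∧
      ∀ m : Fin k → ℤ, D m = ∑ i ∈ S, (∏ l, ((m l : ℂ)) ^ (i l)) • c i := by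
  classical
  obtain ⟨p, hp⟩ := aux (Module.finBasis ℂ (Module.End ℂ W)) k ε hε D hbr hpoly
  obtain ⟨S, c, hSc⟩ := Bf_to_rep (Module.finBasis ℂ (Module.End ℂ W)) p
  have hrep : ∀ m : Fin k → ℤ, D m = ∑ i ∈ S, (∏ l, ((m l : ℂ)) ^ (i l)) • c i :=
    fun m => by rw [hp m, hSc]
  have hzero : ∀ i : Fin k → ℕ, (∏ l, ((0:ℂ)) ^ (i l)) = if i = 0 then 1 else 0 := by
    intro i
    by_cases h : i = 0
    · subst h; simp
    · rw [if_neg h]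
      obtain ⟨l, hl⟩ : ∃ l, i l ≠ 0 := by
        by_contra hc
        push_neg at hc
        exact h (funext hc)
      exact Finset.prod_eq_zero (Finset.mem_univ l) (zero_pow hl)
  have hD0 : D 0 = if (0 : Fin k → ℕ) ∈ S then c 0 else 0 := by
    calc D 0 = ∑ i ∈ S, (∏ l, (((0 : Fin k → ℤ) l : ℤ) : ℂ) ^ (i l)) • c i := hrep 0
      _ = ∑ i ∈ S, (if i = 0 then (1:ℂ) else 0) • c i := by
          refine Finset.sum_congr rfl fun i _ => ?_
          congr 1
          rw [← hzero i]
          refine Finset.prod_congr rfl fun l _ => ?_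
          norm_num
      _ = if (0 : Fin k → ℕ) ∈ S then c 0 else 0 := by
          simp only [ite_smul, one_smul, zero_smul]
          exact Finset.sum_ite_eq' S 0 c
  by_cases h0 : (0 : Fin k → ℕ) ∈ S
  · refine ⟨S, c, h0, ?_, hrep⟩
    rw [hD0, if_pos h0]
  · refine ⟨insert 0 S, fun i => if i = 0 then D 0 else c i,
      Finset.mem_insert_self _ _, by simp, ?_⟩
    intro m
    rw [Finset.sum_insert h0]
    simp only []
    have hD0' : D 0 = 0 := by rw [hD0, if_neg h0]
    rw [show (if True then D 0 else c 0) = D 0 from if_pos trivial,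
      hD0', smul_zero, zero_add, hrep m]
    refine Finset.sum_congr rfl fun i hi => ?_
    rw [if_neg (by rintro rfl; exact h0 hi)]
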